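/- For R > 0, μ > 0, n ≥ 2, and every X ∈ (0,∞)², the matrix S_n(X) := D²Φ_n(X) M(X) is symmetric positive definite; moreover, for X ∈ [0,∞)², it is positive semidefinite: ⟨S_n(X)ξ, ξ⟩ ≥ 0 for all ξ ∈ ℝ². -/

import Mathlib

open Matrix Finset

/-- `α_{k,n} = R (k + μ (n - k - 1))`. -/
noncomputable def alph (R mu : ℝ) (n k : ℕ) : ℝ := R * ((k : ℝ) + mu * ((n : ℝ) - (k : ℝ) - 1))

/-- `a_{j,n}`. -/
noncomputable def coefa (R mu : ℝ) (n j : ℕ) : ℝ :=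
  (n.choose j : ℝ) * ∏ k ∈ Finset.range j, ((k : ℝ) + alph R mu n k) / alph R mu n k

/-- `Φ_n(X) = Σ_{j=0}^n a_{j,n} X₁^j X₂^{n-j}`. -/
noncomputable def Phi (R mu : ℝ) (n : ℕ) (X : ℝ × ℝ) : ℝ :=
  ∑ j ∈ Finset.range (n + 1), coefa R mu n j * X.1 ^ j * X.2 ^ (n - j)

/-- first partial derivative of `Φ_n` in the first variable. -/
noncomputable def d1Phi (R mu : ℝ) (n : ℕ) (X : ℝ × ℝ) : ℝ :=
  deriv (fun t => Phi R mu n (t, X.2)) X.1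

/-- first partial derivative of `Φ_n` in the second variable. -/
noncomputable def d2Phi (R mu : ℝ) (n : ℕ) (X : ℝ × ℝ) : ℝ :=
  deriv (fun t => Phi R mu n (X.1, t)) X.2

/-- `∂₁²Φ_n`. -/
noncomputable def d11Phi (R mu : ℝ) (n : ℕ) (X : ℝ × ℝ) : ℝ :=
  deriv (fun t => d1Phi R mu n (t, X.2)) X.1

/-- `∂₁∂₂Φ_n`. -/
noncomputable def d12Phi (R mu : ℝ) (n : ℕ) (X : ℝ × ℝ) : ℝ :=
  deriv (fun t => d2Phi R mu n (t, X.2)) X.1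

/-- `∂₂²Φ_n`. -/
noncomputable def d22Phi (R mu : ℝ) (n : ℕ) (X : ℝ × ℝ) : ℝ :=
  deriv (fun t => d2Phi R mu n (X.1, t)) X.2

/-- The Hessian matrix `D²Φ_n(X)`. -/
noncomputable def hessPhi (R mu : ℝ) (n : ℕ) (X : ℝ × ℝ) : Matrix (Fin 2) (Fin 2) ℝ :=
  !![d11Phi R mu n X, d12Phi R mu n X; d12Phi R mu n X, d22Phi R mu n X]

/-- The mobility matrix `M(X)`. -/
noncomputable def mobM (R mu : ℝ) (X : ℝ × ℝ) : Matrix (Fin 2) (Fin 2) ℝ :=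
  !![(1 + R) * X.1, R * X.1; mu * R * X.2, mu * R * X.2]

/-- The quantity `A_{j,k}`. -/
noncomputable def Acoef (R mu : ℝ) (n j k : ℕ) : ℝ :=
  ((j : ℝ) + 2) * ((n : ℝ) - (k : ℝ)) * coefa R mu n (j + 2) * coefa R mu n k
    - ((n : ℝ) - (j : ℝ) - 1) * ((k : ℝ) + 1) * coefa R mu n (j + 1) * coefa R mu n (k + 1)

/-- `ν_n`. -/
noncomputable def nuc (R mu : ℝ) (n : ℕ) : ℝ :=
  Real.exp (((n : ℝ) - 1) * ((1 + R * max 1 mu) * Real.log (1 + 1 / (R * max 1 mu)) - 1)) - 1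


section DerivLemmas
variable (R mu : ℝ)

lemma d1Phi_eq (n : ℕ) (X : ℝ × ℝ) :
    d1Phi R mu n X = ∑ j ∈ range (n+1),
      coefa R mu n j * ((j:ℝ) * X.1^(j-1)) * X.2^(n-j) := by
  have h : HasDerivAt (fun t => Phi R mu n (t, X.2))
      (∑ j ∈ range (n+1), coefa R mu n j * ((j:ℝ) * X.1^(j-1)) * X.2^(n-j)) X.1 := by
    simp only [Phi]
    exact HasDerivAt.fun_sum fun j _ => ((hasDerivAt_pow j X.1).const_mul _).mul_const _
  exact h.deriv

lemma d2Phi_eq (n : ℕ) (X : ℝ × ℝ) :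
    d2Phi R mu n X = ∑ j ∈ range (n+1),
      coefa R mu n j * X.1^j * (((n-j : ℕ):ℝ) * X.2^(n-j-1)) := by
  have h : HasDerivAt (fun t => Phi R mu n (X.1, t))
      (∑ j ∈ range (n+1), coefa R mu n j * X.1^j * (((n-j : ℕ):ℝ) * X.2^(n-j-1))) X.2 := by
    simp only [Phi]
    exact HasDerivAt.fun_sum fun j _ => (hasDerivAt_pow (n-j) X.2).const_mul _
  exact h.deriv

lemma d11Phi_eq (n : ℕ) (X : ℝ × ℝ) :
    d11Phi R mu n X = ∑ j ∈ range (n+1),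
      coefa R mu n j * ((j:ℝ) * (((j-1 : ℕ):ℝ) * X.1^(j-1-1))) * X.2^(n-j) := by
  have hfun : (fun t => d1Phi R mu n (t, X.2))
      = fun t => ∑ j ∈ range (n+1), coefa R mu n j * ((j:ℝ) * t^(j-1)) * X.2^(n-j) := by
    funext t; exact d1Phi_eq R mu n (t, X.2)
  rw [d11Phi, hfun]
  exact (HasDerivAt.fun_sum fun j _ =>
    (((hasDerivAt_pow (j-1) X.1).const_mul ((j:ℝ))).const_mul _).mul_const _).deriv

lemma d12Phi_eq (n : ℕ) (X : ℝ × ℝ) :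
    d12Phi R mu n X = ∑ j ∈ range (n+1),
      coefa R mu n j * ((j:ℝ) * X.1^(j-1)) * (((n-j : ℕ):ℝ) * X.2^(n-j-1)) := by
  have hfun : (fun t => d2Phi R mu n (t, X.2))
      = fun t => ∑ j ∈ range (n+1), coefa R mu n j * t^j * (((n-j : ℕ):ℝ) * X.2^(n-j-1)) := by
    funext t; exact d2Phi_eq R mu n (t, X.2)
  rw [d12Phi, hfun]
  exact (HasDerivAt.fun_sum fun j _ =>
    ((hasDerivAt_pow j X.1).const_mul _).mul_const _).deriv

lemma d22Phi_eq (n : ℕ) (X : ℝ × ℝ) :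
    d22Phi R mu n X = ∑ j ∈ range (n+1),
      coefa R mu n j * X.1^j * (((n-j : ℕ):ℝ) * (((n-j-1 : ℕ):ℝ) * X.2^(n-j-1-1))) := by
  have hfun : (fun t => d2Phi R mu n (X.1, t))
      = fun t => ∑ j ∈ range (n+1), coefa R mu n j * X.1^j * (((n-j : ℕ):ℝ) * t^(n-j-1)) := by
    funext t; exact d2Phi_eq R mu n (X.1, t)
  rw [d22Phi, hfun]
  exact (HasDerivAt.fun_sum fun j _ =>
    ((hasDerivAt_pow (n-j-1) X.2).const_mul _).const_mul _).deriv

end DerivLemmas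

section CleanLemmas
variable (R mu : ℝ)

lemma d11_clean (m : ℕ) (X : ℝ × ℝ) :
    d11Phi R mu (m+2) X = ∑ i ∈ range (m+1),
      ((i:ℝ)+2)*((i:ℝ)+1) * coefa R mu (m+2) (i+2) * (X.1^i * X.2^(m-i)) := by
  rw [d11Phi_eq]
  rw [show m+2+1 = (m+1)+1+1 from rfl, Finset.sum_range_succ', Finset.sum_range_succ']
  norm_num
  refine Finset.sum_congr rfl fun i _ => ?_
  have h3 : m+2-(i+1+1) = m-i := by omega
  have h4 : i+1+1 = i+2 := rfl
  rw [h3, h4]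
  push_cast
  ring

lemma d12_clean (m : ℕ) (X : ℝ × ℝ) :
    d12Phi R mu (m+2) X = ∑ i ∈ range (m+1),
      ((i:ℝ)+1)*((m:ℝ)+1-(i:ℝ)) * coefa R mu (m+2) (i+1) * (X.1^i * X.2^(m-i)) := by
  rw [d12Phi_eq]
  rw [show m+2+1 = (m+1+1)+1 from rfl, Finset.sum_range_succ', Finset.sum_range_succ]
  norm_num
  refine Finset.sum_congr rfl fun i hi => ?_
  have hi' : i ≤ m := by have := mem_range.mp hi; omega
  have h3 : m+2-(i+1)-1 = m-i := by omega
  have h2 : m+2-(i+1) = m+1-i := by omega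
  rw [h3, h2, Nat.cast_sub (by omega : i ≤ m+1)]
  push_cast
  ring

lemma d22_clean (m : ℕ) (X : ℝ × ℝ) :
    d22Phi R mu (m+2) X = ∑ i ∈ range (m+1),
      ((m:ℝ)+2-(i:ℝ))*((m:ℝ)+1-(i:ℝ)) * coefa R mu (m+2) i * (X.1^i * X.2^(m-i)) := by
  rw [d22Phi_eq]
  rw [show m+2+1 = (m+1)+1+1 from rfl, Finset.sum_range_succ, Finset.sum_range_succ]
  norm_num
  refine Finset.sum_congr rfl fun i hi => ?_
  have hi' : i ≤ m := by have := mem_range.mp hi; omega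
  have h0 : m+2-i-1 = m+1-i := by omega
  have h2 : m+2-i-1-1 = m-i := by omega
  rw [h2, h0, Nat.cast_sub (by omega : i ≤ m+2), Nat.cast_sub (by omega : i ≤ m+1)]
  push_cast
  ring

end CleanLemmas

section CoefLemmas
variable {R mu : ℝ}

lemma alph_pos (hR : 0 < R) (hmu : 0 < mu) (m k : ℕ) (hk : k < m+2) :
    0 < alph R mu (m+2) k := by
  unfold alph
  rcases Nat.eq_zero_or_pos k with rfl | hk1
  · have : (0:ℝ) < mu * ((m:ℝ)+1) := by positivity
    push_cast
    nlinarith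
  · have h1 : (1:ℝ) ≤ (k:ℝ) := by exact_mod_cast hk1
    have h2 : (k:ℝ) ≤ (m:ℝ)+1 := by exact_mod_cast (by omega : k ≤ m+1)
    push_cast
    nlinarith [mul_nonneg hmu.le (by linarith : (0:ℝ) ≤ (m:ℝ)+2-(k:ℝ)-1)]

lemma coefa_pos (hR : 0 < R) (hmu : 0 < mu) (m j : ℕ) (hj : j ≤ m+2) :
    0 < coefa R mu (m+2) j := by
  unfold coefa
  apply mul_pos
  · exact_mod_cast Nat.choose_pos hj
  · apply Finset.prod_pos
    intro k hk
    have hk' : k < m+2 := by have := mem_range.mp hk; omega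
    have hA := alph_pos hR hmu m k hk'
    exact div_pos (by linarith [Nat.cast_nonneg (α := ℝ) k]) hA

lemma coefa_rec (hR : 0 < R) (hmu : 0 < mu) (m j : ℕ) (hj : j < m+2) :
    ((j:ℝ)+1) * coefa R mu (m+2) (j+1) * alph R mu (m+2) j
      = ((m:ℝ)+2-(j:ℝ)) * coefa R mu (m+2) j * ((j:ℝ) + alph R mu (m+2) j) := by
  have hA := alph_pos hR hmu m j hj
  have hA' : alph R mu (m+2) j ≠ 0 := ne_of_gt hA
  have hch : (((m+2).choose (j+1) : ℕ) : ℝ) * ((j:ℝ)+1)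
      = (((m+2).choose j : ℕ) : ℝ) * ((m:ℝ)+2-(j:ℝ)) := by
    have h2 := Nat.choose_succ_right_eq (m+2) j
    have h3 : (m:ℝ)+2-(j:ℝ) = ((m+2-j : ℕ) : ℝ) := by
      rw [Nat.cast_sub (by omega)]; push_cast; ring
    rw [h3]
    exact_mod_cast h2
  have hPa : (0:ℝ) < ∏ k ∈ range j, alph R mu (m+2) k := by
    apply Finset.prod_pos
    intro k hk
    exact alph_pos hR hmu m k (by have := mem_range.mp hk; omega)
  have hPn : (0:ℝ) < ∏ k ∈ range j, ((k:ℝ) + alph R mu (m+2) k) := by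
    apply Finset.prod_pos
    intro k hk
    have hAk := alph_pos hR hmu m k (by have := mem_range.mp hk; omega)
    linarith [Nat.cast_nonneg (α := ℝ) k]
  unfold coefa
  simp only [Finset.prod_div_distrib]
  rw [Finset.prod_range_succ, Finset.prod_range_succ]
  field_simp
  linear_combination hch

end CoefLemmas

section KeyLemma
variable {R mu : ℝ}

lemma coefa_key (hR : 0 < R) (hmu : 0 < mu) (m i : ℕ) (hi : i < m+1) :
    (((i:ℝ)+1)*((m:ℝ)+1-(i:ℝ)) * coefa R mu (m+2) (i+1))^2
      < (((i:ℝ)+2)*((i:ℝ)+1) * coefa R mu (m+2) (i+2))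
        * (((m:ℝ)+2-(i:ℝ))*((m:ℝ)+1-(i:ℝ)) * coefa R mu (m+2) i) := by
  have hα : 0 < alph R mu (m+2) i := alph_pos hR hmu m i (by omega)
  have hα' : 0 < alph R mu (m+2) (i+1) := alph_pos hR hmu m (i+1) (by omega)
  have hiα : 0 < (i:ℝ) + alph R mu (m+2) i := by
    linarith [Nat.cast_nonneg (α := ℝ) i]
  have hB := coefa_pos hR hmu m (i+1) (by omega)
  have hA0 := coefa_pos hR hmu m i (by omega)
  have hC := coefa_pos hR hmu m (i+2) (by omega)
  have e1 := coefa_rec hR hmu m i (by omega)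
  have e2 := coefa_rec hR hmu m (i+1) (by omega)
  push_cast at e2
  have him : (i:ℝ) ≤ (m:ℝ) := by exact_mod_cast (by omega : i ≤ m)
  have key2 : alph R mu (m+2) (i+1) * ((i:ℝ) + alph R mu (m+2) i)
      < ((i:ℝ)+1+alph R mu (m+2) (i+1)) * alph R mu (m+2) i := by
    have hdiff : ((i:ℝ)+1+alph R mu (m+2) (i+1)) * alph R mu (m+2) i
        - alph R mu (m+2) (i+1) * ((i:ℝ) + alph R mu (m+2) i)
        = R * mu * ((m:ℝ)+1) := by
      simp only [alph]; push_cast; ring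
    nlinarith [mul_pos (mul_pos hR hmu) (show (0:ℝ) < (m:ℝ)+1 by positivity)]
  have hL : (0:ℝ) < (((i:ℝ)+1)*((m:ℝ)+1-(i:ℝ)) * coefa R mu (m+2) (i+1))^2 := by
    have : (0:ℝ) < ((i:ℝ)+1)*((m:ℝ)+1-(i:ℝ)) * coefa R mu (m+2) (i+1) := by
      apply mul_pos (mul_pos (by positivity) (by linarith)) hB
    positivity
  have h4 : (((i:ℝ)+2)*((i:ℝ)+1) * coefa R mu (m+2) (i+2))
        * (((m:ℝ)+2-(i:ℝ))*((m:ℝ)+1-(i:ℝ)) * coefa R mu (m+2) i)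
        * (alph R mu (m+2) (i+1) * ((i:ℝ) + alph R mu (m+2) i))
      = (((i:ℝ)+1)*((m:ℝ)+1-(i:ℝ)) * coefa R mu (m+2) (i+1))^2
        * (((i:ℝ)+1+alph R mu (m+2) (i+1)) * alph R mu (m+2) i) := by
    linear_combination
      (((i:ℝ)+1)*((m:ℝ)+1-(i:ℝ))*(((m:ℝ)+2-(i:ℝ))*coefa R mu (m+2) i
        *((i:ℝ)+alph R mu (m+2) i))) * e2
      + (-(((i:ℝ)+1)*((m:ℝ)+1-(i:ℝ))^2 * coefa R mu (m+2) (i+1)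
        *((i:ℝ)+1+alph R mu (m+2) (i+1)))) * e1
  have h3 := mul_lt_mul_of_pos_left key2 hL
  rw [← h4] at h3
  exact lt_of_mul_lt_mul_right h3 (le_of_lt (mul_pos hα' hiα))

end KeyLemma

section CS

lemma cs_le (s : Finset ℕ) (p q r z : ℕ → ℝ)
    (hq : ∀ i ∈ s, 0 ≤ q i) (hz : ∀ i ∈ s, 0 ≤ z i)
    (hpz : ∀ i ∈ s, 0 ≤ p i * z i) (hrz : ∀ i ∈ s, 0 ≤ r i * z i)
    (hkey : ∀ i ∈ s, (q i)^2 ≤ p i * r i) :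
    (∑ i ∈ s, q i * z i)^2 ≤ (∑ i ∈ s, p i * z i) * (∑ i ∈ s, r i * z i) := by
  have h1 : ∀ i ∈ s, q i * z i ≤ Real.sqrt (p i * z i) * Real.sqrt (r i * z i) := by
    intro i hi
    rw [show q i * z i = Real.sqrt ((q i * z i)^2) from
      (Real.sqrt_sq (mul_nonneg (hq i hi) (hz i hi))).symm, ← Real.sqrt_mul (hpz i hi)]
    apply Real.sqrt_le_sqrt
    calc (q i * z i) ^ 2 = (q i)^2 * (z i)^2 := by ring
      _ ≤ (p i * r i) * (z i)^2 := mul_le_mul_of_nonneg_right (hkey i hi) (sq_nonneg _)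
      _ = (p i * z i) * (r i * z i) := by ring
  calc (∑ i ∈ s, q i * z i)^2
      ≤ (∑ i ∈ s, Real.sqrt (p i * z i) * Real.sqrt (r i * z i))^2 := by
        apply pow_le_pow_left₀
          (Finset.sum_nonneg fun i hi => mul_nonneg (hq i hi) (hz i hi))
          (Finset.sum_le_sum h1)
    _ ≤ (∑ i ∈ s, Real.sqrt (p i * z i)^2) * (∑ i ∈ s, Real.sqrt (r i * z i)^2) :=
        Finset.sum_mul_sq_le_sq_mul_sq s _ _
    _ = (∑ i ∈ s, p i * z i) * (∑ i ∈ s, r i * z i) := by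
        rw [Finset.sum_congr rfl fun i hi => Real.sq_sqrt (hpz i hi),
          Finset.sum_congr rfl fun i hi => Real.sq_sqrt (hrz i hi)]

lemma cs_lt (s : Finset ℕ) (hs : s.Nonempty) (p q r z : ℕ → ℝ)
    (hq : ∀ i ∈ s, 0 ≤ q i) (hz : ∀ i ∈ s, 0 < z i)
    (hp : ∀ i ∈ s, 0 ≤ p i) (hr : ∀ i ∈ s, 0 ≤ r i)
    (hkey : ∀ i ∈ s, (q i)^2 < p i * r i) :
    (∑ i ∈ s, q i * z i)^2 < (∑ i ∈ s, p i * z i) * (∑ i ∈ s, r i * z i) := by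
  have hpz : ∀ i ∈ s, 0 ≤ p i * z i := fun i hi => mul_nonneg (hp i hi) (hz i hi).le
  have hrz : ∀ i ∈ s, 0 ≤ r i * z i := fun i hi => mul_nonneg (hr i hi) (hz i hi).le
  have h1 : ∀ i ∈ s, q i * z i < Real.sqrt (p i * z i) * Real.sqrt (r i * z i) := by
    intro i hi
    rw [show q i * z i = Real.sqrt ((q i * z i)^2) from
      (Real.sqrt_sq (mul_nonneg (hq i hi) (hz i hi).le)).symm, ← Real.sqrt_mul (hpz i hi)]
    apply Real.sqrt_lt_sqrt (sq_nonneg _)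
    calc (q i * z i) ^ 2 = (q i)^2 * (z i)^2 := by ring
      _ < (p i * r i) * (z i)^2 := by
          exact mul_lt_mul_of_pos_right (hkey i hi) (pow_pos (hz i hi) 2)
      _ = (p i * z i) * (r i * z i) := by ring
  calc (∑ i ∈ s, q i * z i)^2
      < (∑ i ∈ s, Real.sqrt (p i * z i) * Real.sqrt (r i * z i))^2 := by
        apply pow_lt_pow_left₀ (Finset.sum_lt_sum_of_nonempty hs h1)
          (Finset.sum_nonneg fun i hi => mul_nonneg (hq i hi) (hz i hi).le) (by norm_num)
    _ ≤ (∑ i ∈ s, Real.sqrt (p i * z i)^2) * (∑ i ∈ s, Real.sqrt (r i * z i)^2) :=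
        Finset.sum_mul_sq_le_sq_mul_sq s _ _
    _ = (∑ i ∈ s, p i * z i) * (∑ i ∈ s, r i * z i) := by
        rw [Finset.sum_congr rfl fun i hi => Real.sq_sqrt (hpz i hi),
          Finset.sum_congr rfl fun i hi => Real.sq_sqrt (hrz i hi)]

end CS

section SymLemma
variable {R mu : ℝ}

lemma sym_id (hR : 0 < R) (hmu : 0 < mu) (m : ℕ) (X : ℝ × ℝ) :
    R * X.1 * d11Phi R mu (m+2) X + mu * R * X.2 * d12Phi R mu (m+2) X
      = (1+R) * X.1 * d12Phi R mu (m+2) X + mu * R * X.2 * d22Phi R mu (m+2) X := by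
  have hA1 : R * X.1 * d11Phi R mu (m+2) X
      = ∑ j ∈ range (m+2), (R*(j:ℝ)*((j:ℝ)+1)*coefa R mu (m+2) (j+1))
          * (X.1^j * X.2^(m+1-j)) := by
    rw [d11_clean, Finset.mul_sum]
    conv_rhs => rw [Finset.sum_range_succ']
    norm_num
    refine Finset.sum_congr rfl fun i hi => ?_
    have h1 : m+1-(i+1) = m-i := by omega
    rw [h1]
    push_cast
    ring
  have hA2 : mu * R * X.2 * d12Phi R mu (m+2) X
      = ∑ j ∈ range (m+2), (mu*R*((j:ℝ)+1)*((m:ℝ)+1-(j:ℝ))*coefa R mu (m+2) (j+1))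
          * (X.1^j * X.2^(m+1-j)) := by
    rw [d12_clean, Finset.mul_sum]
    conv_rhs => rw [Finset.sum_range_succ]
    have hzero : ((m:ℝ)+1-((m+1:ℕ):ℝ)) = 0 := by push_cast; ring
    rw [show (mu*R*(((m+1:ℕ):ℝ)+1)*((m:ℝ)+1-((m+1:ℕ):ℝ))*coefa R mu (m+2) (m+1+1))
          * (X.1^(m+1) * X.2^(m+1-(m+1))) = 0 by rw [hzero]; ring]
    rw [add_zero]
    refine Finset.sum_congr rfl fun i hi => ?_
    have hi' : i ≤ m := by have := mem_range.mp hi; omega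
    have h1 : m+1-i = (m-i)+1 := by omega
    rw [h1]
    push_cast
    ring
  have hB1 : (1+R) * X.1 * d12Phi R mu (m+2) X
      = ∑ j ∈ range (m+2), ((1+R)*(j:ℝ)*((m:ℝ)+2-(j:ℝ))*coefa R mu (m+2) j)
          * (X.1^j * X.2^(m+1-j)) := by
    rw [d12_clean, Finset.mul_sum]
    conv_rhs => rw [Finset.sum_range_succ']
    norm_num
    refine Finset.sum_congr rfl fun i hi => ?_
    have hi' : i ≤ m := by have := mem_range.mp hi; omega
    have h1 : m+1-(i+1) = m-i := by omega
    rw [h1]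
    push_cast
    ring
  have hB2 : mu * R * X.2 * d22Phi R mu (m+2) X
      = ∑ j ∈ range (m+2), (mu*R*((m:ℝ)+2-(j:ℝ))*((m:ℝ)+1-(j:ℝ))*coefa R mu (m+2) j)
          * (X.1^j * X.2^(m+1-j)) := by
    rw [d22_clean, Finset.mul_sum]
    conv_rhs => rw [Finset.sum_range_succ]
    have hzero : ((m:ℝ)+1-((m+1:ℕ):ℝ)) = 0 := by push_cast; ring
    rw [show (mu*R*((m:ℝ)+2-((m+1:ℕ):ℝ))*((m:ℝ)+1-((m+1:ℕ):ℝ))*coefa R mu (m+2) (m+1))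
          * (X.1^(m+1) * X.2^(m+1-(m+1))) = 0 by rw [hzero]; ring]
    rw [add_zero]
    refine Finset.sum_congr rfl fun i hi => ?_
    have hi' : i ≤ m := by have := mem_range.mp hi; omega
    have h1 : m+1-i = (m-i)+1 := by omega
    rw [h1]
    push_cast
    ring
  rw [hA1, hA2, hB1, hB2, ← Finset.sum_add_distrib, ← Finset.sum_add_distrib]
  refine Finset.sum_congr rfl fun j hj => ?_
  have hj' : j < m+2 := mem_range.mp hj
  have h := coefa_rec hR hmu m j hj'
  simp only [alph] at h
  push_cast at h
  linear_combination (X.1^j * X.2^(m+1-j)) * h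

end SymLemma

section Quad

lemma quad_pos (a b c d x y : ℝ) (ha : 0 < a) (hbc : b = c) (hdet : b * c < a * d)
    (hxy : ¬(x = 0 ∧ y = 0)) : 0 < (a*x + b*y)*x + (c*x + d*y)*y := by
  subst hbc
  rcases eq_or_ne y 0 with rfl | hy
  · have hx : x ≠ 0 := fun h => hxy ⟨h, rfl⟩
    have h2 : 0 < x^2 := by positivity
    nlinarith
  · have hy2 : 0 < y^2 := by positivity
    nlinarith [sq_nonneg (a*x + b*y), mul_pos (sub_pos.mpr hdet) hy2]

lemma quad_nonneg (a b c d x y : ℝ) (ha : 0 ≤ a) (hd : 0 ≤ d) (hbc : b = c)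
    (hdet : b * c ≤ a * d) : 0 ≤ (a*x + b*y)*x + (c*x + d*y)*y := by
  subst hbc
  rcases eq_or_lt_of_le ha with h0 | hpos
  · have hb : b = 0 := by
      have hb2 : b * b ≤ 0 := by nlinarith
      nlinarith [sq_nonneg b]
    rw [hb, ← h0]
    have : (0*x + 0*y)*x + (0*x + d*y)*y = d*y^2 := by ring
    rw [this]
    positivity
  · nlinarith [sq_nonneg (a*x + b*y), mul_nonneg (mul_nonneg (sub_nonneg.mpr hdet)
      (le_of_lt hpos)) (sq_nonneg y), mul_nonneg (sub_nonneg.mpr hdet) (sq_nonneg y)]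

end Quad

section DetLemmas
variable {R mu : ℝ}

lemma detHess_lt (hR : 0 < R) (hmu : 0 < mu) (m : ℕ) (X : ℝ × ℝ)
    (h1 : 0 < X.1) (h2 : 0 < X.2) :
    (d12Phi R mu (m+2) X)^2 < d11Phi R mu (m+2) X * d22Phi R mu (m+2) X := by
  rw [d11_clean, d12_clean, d22_clean]
  exact cs_lt (range (m+1)) ⟨0, mem_range.mpr (by omega)⟩
    (fun i => ((i:ℝ)+2)*((i:ℝ)+1)*coefa R mu (m+2) (i+2))
    (fun i => ((i:ℝ)+1)*((m:ℝ)+1-(i:ℝ))*coefa R mu (m+2) (i+1))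
    (fun i => ((m:ℝ)+2-(i:ℝ))*((m:ℝ)+1-(i:ℝ))*coefa R mu (m+2) i)
    (fun i => X.1^i * X.2^(m-i))
    (fun i hi => by
      have hi' : (i:ℝ) ≤ (m:ℝ) := by exact_mod_cast (by have := mem_range.mp hi; omega : i ≤ m)
      have := coefa_pos hR hmu m (i+1) (by have := mem_range.mp hi; omega)
      apply mul_nonneg (mul_nonneg (by positivity) (by linarith)) this.le)
    (fun i hi => by positivity)
    (fun i hi => by
      have := coefa_pos hR hmu m (i+2) (by have := mem_range.mp hi; omega)
      positivity)
    (fun i hi => by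
      have hi' : (i:ℝ) ≤ (m:ℝ) := by exact_mod_cast (by have := mem_range.mp hi; omega : i ≤ m)
      have := coefa_pos hR hmu m i (by have := mem_range.mp hi; omega)
      apply mul_nonneg (mul_nonneg (by linarith) (by linarith)) this.le)
    (fun i hi => coefa_key hR hmu m i (mem_range.mp hi))

lemma detHess_le (hR : 0 < R) (hmu : 0 < mu) (m : ℕ) (X : ℝ × ℝ)
    (h1 : 0 ≤ X.1) (h2 : 0 ≤ X.2) :
    (d12Phi R mu (m+2) X)^2 ≤ d11Phi R mu (m+2) X * d22Phi R mu (m+2) X := by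
  rw [d11_clean, d12_clean, d22_clean]
  have hz : ∀ i ∈ range (m+1), (0:ℝ) ≤ X.1^i * X.2^(m-i) := fun i hi => by positivity
  exact cs_le (range (m+1))
    (fun i => ((i:ℝ)+2)*((i:ℝ)+1)*coefa R mu (m+2) (i+2))
    (fun i => ((i:ℝ)+1)*((m:ℝ)+1-(i:ℝ))*coefa R mu (m+2) (i+1))
    (fun i => ((m:ℝ)+2-(i:ℝ))*((m:ℝ)+1-(i:ℝ))*coefa R mu (m+2) i)
    (fun i => X.1^i * X.2^(m-i))
    (fun i hi => by
      have hi' : (i:ℝ) ≤ (m:ℝ) := by exact_mod_cast (by have := mem_range.mp hi; omega : i ≤ m)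
      have := coefa_pos hR hmu m (i+1) (by have := mem_range.mp hi; omega)
      apply mul_nonneg (mul_nonneg (by positivity) (by linarith)) this.le)
    hz
    (fun i hi => by
      have := coefa_pos hR hmu m (i+2) (by have := mem_range.mp hi; omega)
      have hzz := hz i hi
      apply mul_nonneg (by positivity) hzz)
    (fun i hi => by
      have hi' : (i:ℝ) ≤ (m:ℝ) := by exact_mod_cast (by have := mem_range.mp hi; omega : i ≤ m)
      have := coefa_pos hR hmu m i (by have := mem_range.mp hi; omega)
      have hzz := hz i hi
      apply mul_nonneg (mul_nonneg (mul_nonneg (by linarith) (by linarith)) this.le) hzz)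
    (fun i hi => (coefa_key hR hmu m i (mem_range.mp hi)).le)

lemma d11_pos (hR : 0 < R) (hmu : 0 < mu) (m : ℕ) (X : ℝ × ℝ)
    (h1 : 0 < X.1) (h2 : 0 < X.2) : 0 < d11Phi R mu (m+2) X := by
  rw [d11_clean]
  apply Finset.sum_pos _ ⟨0, mem_range.mpr (by omega)⟩
  intro i hi
  have := coefa_pos hR hmu m (i+2) (by have := mem_range.mp hi; omega)
  positivity

lemma d12_pos (hR : 0 < R) (hmu : 0 < mu) (m : ℕ) (X : ℝ × ℝ)
    (h1 : 0 < X.1) (h2 : 0 < X.2) : 0 < d12Phi R mu (m+2) X := by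
  rw [d12_clean]
  apply Finset.sum_pos _ ⟨0, mem_range.mpr (by omega)⟩
  intro i hi
  have hi' : (i:ℝ) ≤ (m:ℝ) := by exact_mod_cast (by have := mem_range.mp hi; omega : i ≤ m)
  have := coefa_pos hR hmu m (i+1) (by have := mem_range.mp hi; omega)
  apply mul_pos (mul_pos (mul_pos (by positivity) (by linarith)) this) (by positivity)

lemma d22_pos (hR : 0 < R) (hmu : 0 < mu) (m : ℕ) (X : ℝ × ℝ)
    (h1 : 0 < X.1) (h2 : 0 < X.2) : 0 < d22Phi R mu (m+2) X := by
  rw [d22_clean]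
  apply Finset.sum_pos _ ⟨0, mem_range.mpr (by omega)⟩
  intro i hi
  have hi' : (i:ℝ) ≤ (m:ℝ) := by exact_mod_cast (by have := mem_range.mp hi; omega : i ≤ m)
  have := coefa_pos hR hmu m i (by have := mem_range.mp hi; omega)
  apply mul_pos (mul_pos (mul_pos (by linarith) (by linarith)) this) (by positivity)

lemma d11_nonneg (hR : 0 < R) (hmu : 0 < mu) (m : ℕ) (X : ℝ × ℝ)
    (h1 : 0 ≤ X.1) (h2 : 0 ≤ X.2) : 0 ≤ d11Phi R mu (m+2) X := by
  rw [d11_clean]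
  apply Finset.sum_nonneg
  intro i hi
  have := coefa_pos hR hmu m (i+2) (by have := mem_range.mp hi; omega)
  positivity

lemma d12_nonneg (hR : 0 < R) (hmu : 0 < mu) (m : ℕ) (X : ℝ × ℝ)
    (h1 : 0 ≤ X.1) (h2 : 0 ≤ X.2) : 0 ≤ d12Phi R mu (m+2) X := by
  rw [d12_clean]
  apply Finset.sum_nonneg
  intro i hi
  have hi' : (i:ℝ) ≤ (m:ℝ) := by exact_mod_cast (by have := mem_range.mp hi; omega : i ≤ m)
  have := coefa_pos hR hmu m (i+1) (by have := mem_range.mp hi; omega)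
  apply mul_nonneg (mul_nonneg (mul_nonneg (by positivity) (by linarith)) this.le) (by positivity)

lemma d22_nonneg (hR : 0 < R) (hmu : 0 < mu) (m : ℕ) (X : ℝ × ℝ)
    (h1 : 0 ≤ X.1) (h2 : 0 ≤ X.2) : 0 ≤ d22Phi R mu (m+2) X := by
  rw [d22_clean]
  apply Finset.sum_nonneg
  intro i hi
  have hi' : (i:ℝ) ≤ (m:ℝ) := by exact_mod_cast (by have := mem_range.mp hi; omega : i ≤ m)
  have := coefa_pos hR hmu m i (by have := mem_range.mp hi; omega)
  apply mul_nonneg (mul_nonneg (mul_nonneg (by linarith) (by linarith)) this.le) (by positivity)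

end DetLemmas

theorem stmt10 (R mu : ℝ) (hR : 0 < R) (hmu : 0 < mu) (n : ℕ) (hn : 2 ≤ n) :
    (∀ X : ℝ × ℝ, 0 < X.1 → 0 < X.2 →
      (hessPhi R mu n X * mobM R mu X).IsSymm ∧
      ∀ ξ : Fin 2 → ℝ, ξ ≠ 0 →
        0 < dotProduct (((hessPhi R mu n X * mobM R mu X)).mulVec ξ) ξ) ∧
    (∀ X : ℝ × ℝ, 0 ≤ X.1 → 0 ≤ X.2 →
      ∀ ξ : Fin 2 → ℝ,
        0 ≤ dotProduct (((hessPhi R mu n X * mobM R mu X)).mulVec ξ) ξ) := by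
  obtain ⟨m, rfl⟩ : ∃ m, n = m + 2 := ⟨n - 2, by omega⟩
  constructor
  · intro X h1 h2
    have hsym := sym_id hR hmu m X
    have hdet := detHess_lt hR hmu m X h1 h2
    have hd11 := d11_pos hR hmu m X h1 h2
    have hd12 := d12_pos hR hmu m X h1 h2
    have hd22 := d22_pos hR hmu m X h1 h2
    constructor
    · show (hessPhi R mu (m+2) X * mobM R mu X)ᵀ = _
      rw [hessPhi, mobM, Matrix.mul_fin_two]
      ext i j
      fin_cases i <;> fin_cases j <;> simp <;>
        first
        | linear_combination hsym
        | linear_combination -hsym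
    · intro ξ hξ
      have hx : ¬(ξ 0 = 0 ∧ ξ 1 = 0) := by
        rintro ⟨ha, hb⟩
        apply hξ
        funext i
        fin_cases i
        · exact ha
        · exact hb
      have hS00 : 0 < d11Phi R mu (m+2) X * ((1+R)*X.1) + d12Phi R mu (m+2) X * (mu*R*X.2) := by
        nlinarith [mul_pos (mul_pos hmu hR) h2, mul_pos hd11 h1, mul_pos hd12 h2]
      have hbc : d11Phi R mu (m+2) X * (R*X.1) + d12Phi R mu (m+2) X * (mu*R*X.2)
          = d12Phi R mu (m+2) X * ((1+R)*X.1) + d22Phi R mu (m+2) X * (mu*R*X.2) := by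
        linear_combination hsym
      have hkey : (d11Phi R mu (m+2) X * ((1+R)*X.1) + d12Phi R mu (m+2) X * (mu*R*X.2))
            * (d12Phi R mu (m+2) X * (R*X.1) + d22Phi R mu (m+2) X * (mu*R*X.2))
          - (d11Phi R mu (m+2) X * (R*X.1) + d12Phi R mu (m+2) X * (mu*R*X.2))
            * (d12Phi R mu (m+2) X * ((1+R)*X.1) + d22Phi R mu (m+2) X * (mu*R*X.2))
          = mu*R*X.1*X.2*(d11Phi R mu (m+2) X * d22Phi R mu (m+2) X
              - (d12Phi R mu (m+2) X)^2) := by ring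
      have hdet2 : (d11Phi R mu (m+2) X * (R*X.1) + d12Phi R mu (m+2) X * (mu*R*X.2))
            * (d12Phi R mu (m+2) X * ((1+R)*X.1) + d22Phi R mu (m+2) X * (mu*R*X.2))
          < (d11Phi R mu (m+2) X * ((1+R)*X.1) + d12Phi R mu (m+2) X * (mu*R*X.2))
            * (d12Phi R mu (m+2) X * (R*X.1) + d22Phi R mu (m+2) X * (mu*R*X.2)) := by
        nlinarith [hkey, hdet, mul_pos (mul_pos (mul_pos hmu hR) h1) h2]
      have main := quad_pos _ _ _ _ (ξ 0) (ξ 1) hS00 hbc hdet2 hx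
      rw [hessPhi, mobM, Matrix.mul_fin_two]
      simp [Matrix.mulVec, dotProduct, Fin.sum_univ_two]
      exact lt_of_lt_of_eq main (by ring)
  · intro X h1 h2 ξ
    have hsym := sym_id hR hmu m X
    have hdet := detHess_le hR hmu m X h1 h2
    have hd11 := d11_nonneg hR hmu m X h1 h2
    have hd12 := d12_nonneg hR hmu m X h1 h2
    have hd22 := d22_nonneg hR hmu m X h1 h2
    have hS00 : 0 ≤ d11Phi R mu (m+2) X * ((1+R)*X.1) + d12Phi R mu (m+2) X * (mu*R*X.2) := by
      have h3 := mul_nonneg (mul_nonneg hmu.le hR.le) h2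
      nlinarith [mul_nonneg hd11 h1, mul_nonneg hd12 h2]
    have hS11 : 0 ≤ d12Phi R mu (m+2) X * (R*X.1) + d22Phi R mu (m+2) X * (mu*R*X.2) := by
      have h3 := mul_nonneg (mul_nonneg hmu.le hR.le) h2
      nlinarith [mul_nonneg hd12 h1, mul_nonneg hd22 h2]
    have hbc : d11Phi R mu (m+2) X * (R*X.1) + d12Phi R mu (m+2) X * (mu*R*X.2)
        = d12Phi R mu (m+2) X * ((1+R)*X.1) + d22Phi R mu (m+2) X * (mu*R*X.2) := by
      linear_combination hsym
    have hkey : (d11Phi R mu (m+2) X * ((1+R)*X.1) + d12Phi R mu (m+2) X * (mu*R*X.2))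
          * (d12Phi R mu (m+2) X * (R*X.1) + d22Phi R mu (m+2) X * (mu*R*X.2))
        - (d11Phi R mu (m+2) X * (R*X.1) + d12Phi R mu (m+2) X * (mu*R*X.2))
          * (d12Phi R mu (m+2) X * ((1+R)*X.1) + d22Phi R mu (m+2) X * (mu*R*X.2))
        = mu*R*X.1*X.2*(d11Phi R mu (m+2) X * d22Phi R mu (m+2) X
            - (d12Phi R mu (m+2) X)^2) := by ring
    have hdet2 : (d11Phi R mu (m+2) X * (R*X.1) + d12Phi R mu (m+2) X * (mu*R*X.2))
          * (d12Phi R mu (m+2) X * ((1+R)*X.1) + d22Phi R mu (m+2) X * (mu*R*X.2))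
        ≤ (d11Phi R mu (m+2) X * ((1+R)*X.1) + d12Phi R mu (m+2) X * (mu*R*X.2))
          * (d12Phi R mu (m+2) X * (R*X.1) + d22Phi R mu (m+2) X * (mu*R*X.2)) := by
      nlinarith [hkey, hdet, mul_nonneg (mul_nonneg (mul_nonneg hmu.le hR.le) h1) h2]
    have main := quad_nonneg _ _ _ _ (ξ 0) (ξ 1) hS00 hS11 hbc hdet2
    rw [hessPhi, mobM, Matrix.mul_fin_two]
    simp [Matrix.mulVec, dotProduct, Fin.sum_univ_two]
    exact le_of_le_of_eq main (by ring)
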